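/- Let M, N ⊆ ℝ³ be compact sets, μ a Borel probability measure whose support equals M, and C : M → N a continuous surjective map. If dₚ(M,N;C) = 0, i.e. the infimum over affine isometries R of ℝ³ of ∫_M ‖R x − C x‖² dμ(x) is zero, then M and N are congruent: there exists an affine isometry R* of ℝ³ with R*(M) = N. -/

import Mathlib

open MeasureTheory

noncomputable section

local notation "E3" => EuclideanSpace ℝ (Fin 3)

open Filter Topology

set_option maxHeartbeats 1600000 in
/-- For compact `M, N ⊆ ℝ³`, a Borel probability measure `μ` whose support
equals `M` (full measure on `M` and positive mass near every point of `M`), and a continuous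
surjection `C : M → N`, if `dₚ(M,N;C) = 0` then `M` and `N` are congruent. -/
theorem procrustes_zero_implies_congruent
    (M N : Set E3) (hM : IsCompact M) (hN : IsCompact N)
    (μ : Measure E3) [IsProbabilityMeasure μ] (hμM : μ Mᶜ = 0)
    (hsupp : ∀ x ∈ M, ∀ r > (0:ℝ), 0 < μ (Metric.ball x r))
    (C : E3 → E3) (hC : ContinuousOn C M) (hCsurj : C '' M = N)
    (hzero : (⨅ R : E3 ≃ᵃⁱ[ℝ] E3, ∫ x in M, ‖R x - C x‖ ^ 2 ∂μ) = 0) :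
    ∃ Rstar : E3 ≃ᵃⁱ[ℝ] E3, ⇑Rstar '' M = N := by
  classical
  have hMmeas : MeasurableSet M := hM.isClosed.measurableSet
  have hMne : M.Nonempty := by
    by_contra h
    rw [Set.not_nonempty_iff_eq_empty] at h
    rw [h, Set.compl_empty, measure_univ] at hμM
    exact one_ne_zero hμM
  -- Key extraction lemma: if the integral is small relative to the measure of a ball,
  -- there is a point in the ball where `‖R y - C y‖` is small.
  have key : ∀ (R : E3 ≃ᵃⁱ[ℝ] E3) (x : E3), x ∈ M → ∀ δ : ℝ, 0 < δ → ∀ ε : ℝ, 0 < ε →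
      (∫ z in M, ‖R z - C z‖ ^ 2 ∂μ) < ε ^ 2 * (μ (Metric.ball x δ)).toReal →
      ∃ y, y ∈ Metric.ball x δ ∩ M ∧ ‖R y - C y‖ ≤ ε := by
    intro R x hx δ hδ ε hε hint
    by_contra hcon
    push_neg at hcon
    set f : E3 → ℝ := fun z => ‖R z - C z‖ ^ 2 with hf
    have hfc : ContinuousOn f M := ((R.continuous.continuousOn.sub hC).norm.pow 2)
    have hfi : IntegrableOn f M μ := hfc.integrableOn_compact hM
    have hS : MeasurableSet (Metric.ball x δ ∩ M) := measurableSet_ball.inter hMmeas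
    have hμS : μ (Metric.ball x δ ∩ M) = μ (Metric.ball x δ) := by
      have h1 : μ (Metric.ball x δ \ M) = 0 :=
        measure_mono_null (fun y hy => hy.2) hμM
      have h2 := measure_inter_add_diff (μ := μ) (Metric.ball x δ) hMmeas
      rw [h1, add_zero] at h2
      exact h2
    have hlow : ε ^ 2 * (μ (Metric.ball x δ ∩ M)).toReal
        ≤ ∫ z in Metric.ball x δ ∩ M, f z ∂μ := by
      refine setIntegral_ge_of_const_le_real hS (measure_ne_top μ _) ?_
        (hfi.mono_set Set.inter_subset_right)
      intro y hy
      have h := hcon y ⟨hy.1, hy.2⟩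
      have h2 : ε ≤ ‖R y - C y‖ := h.le
      show ε ^ 2 ≤ ‖R y - C y‖ ^ 2
      have := norm_nonneg (R y - C y)
      nlinarith
    have hmono : ∫ z in Metric.ball x δ ∩ M, f z ∂μ ≤ ∫ z in M, f z ∂μ :=
      setIntegral_mono_set hfi (Eventually.of_forall fun z => by positivity)
        (HasSubset.Subset.eventuallyLE Set.inter_subset_right)
    rw [hμS] at hlow
    linarith
  -- A minimizing sequence of isometries
  have hnonempty : Nonempty (E3 ≃ᵃⁱ[ℝ] E3) := ⟨AffineIsometryEquiv.refl ℝ E3⟩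
  have hseq : ∀ n : ℕ, ∃ R : E3 ≃ᵃⁱ[ℝ] E3,
      (∫ z in M, ‖R z - C z‖ ^ 2 ∂μ) < 1 / (n + 1) := by
    intro n
    apply exists_lt_of_ciInf_lt
    rw [hzero]
    positivity
  choose R hR using hseq
  obtain ⟨x₀, hx₀⟩ := hMne
  obtain ⟨KM, hKM⟩ := hM.isBounded.subset_closedBall 0
  obtain ⟨KN, hKN⟩ := hN.isBounded.subset_closedBall 0
  set c₀ : ℝ := (μ (Metric.ball x₀ 1)).toReal with hc₀def
  have hc₀ : 0 < c₀ := ENNReal.toReal_pos (hsupp x₀ hx₀ 1 one_pos).ne' (measure_ne_top μ _)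
  set ε₀ : ℝ := Real.sqrt (2 / c₀) with hε₀def
  have hε₀ : 0 < ε₀ := Real.sqrt_pos.2 (by positivity)
  have hε₀sq : ε₀ ^ 2 * c₀ = 2 := by
    rw [hε₀def, Real.sq_sqrt (by positivity)]
    field_simp
  -- a point witnessing boundedness for each n
  have hyB : ∀ n : ℕ, ∃ y, y ∈ Metric.ball x₀ 1 ∩ M ∧ ‖R n y - C y‖ ≤ ε₀ := by
    intro n
    apply key (R n) x₀ hx₀ 1 one_pos ε₀ hε₀
    have h1 : (1:ℝ) / (n + 1) ≤ 1 := by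
      rw [div_le_one (by positivity)]
      have := Nat.cast_nonneg (α := ℝ) n
      linarith
    have := hR n
    rw [hε₀sq]
    linarith
  -- decompose each isometry into linear part and translation part
  set A : ℕ → E3 →L[ℝ] E3 :=
    fun n => ((R n).linearIsometryEquiv.toLinearIsometry.toContinuousLinearMap) with hAdef
  set bb : ℕ → E3 := fun n => R n 0 with hbbdef
  have hdec : ∀ (n : ℕ) (x : E3), R n x = A n x + bb n := by
    intro n x
    have h := (R n).map_vadd (0 : E3) x
    simp only [vadd_eq_add, add_zero] at h
    rw [h]
    rfl
  have hAnorm : ∀ n, ‖A n‖ ≤ 1 := by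
    intro n
    refine ContinuousLinearMap.opNorm_le_bound _ zero_le_one ?_
    intro x
    have : ‖A n x‖ = ‖x‖ := (R n).linearIsometryEquiv.norm_map x
    rw [this, one_mul]
  have hbnorm : ∀ n, ‖bb n‖ ≤ ‖x₀‖ + (1 + ε₀ + KN) := by
    intro n
    obtain ⟨y, ⟨hy1, hy2⟩, hy3⟩ := hyB n
    have h1 : dist (R n 0) (R n x₀) = dist (0 : E3) x₀ := (R n).dist_map 0 x₀
    have h2 : dist (R n x₀) (R n y) = dist x₀ y := (R n).dist_map x₀ y
    have h3 : ‖C y‖ ≤ KN := by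
      have hCy : C y ∈ N := hCsurj ▸ Set.mem_image_of_mem C hy2
      simpa [Metric.mem_closedBall, dist_zero_right] using hKN hCy
    have h4 : dist x₀ y ≤ 1 := by
      have : dist y x₀ < 1 := Metric.mem_ball.1 hy1
      rw [dist_comm]
      linarith
    have h5 := dist_triangle4 (R n 0) (R n x₀) (R n y) (0 : E3)
    have h6 : dist (R n y) (0 : E3) ≤ dist (R n y) (C y) + dist (C y) 0 := dist_triangle _ _ _
    have h7 : dist (R n y) (C y) = ‖R n y - C y‖ := dist_eq_norm _ _
    have h8 : dist (C y) (0 : E3) = ‖C y‖ := dist_zero_right _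
    have h9 : dist (0 : E3) x₀ = ‖x₀‖ := by rw [dist_comm]; exact dist_zero_right _
    have h10 : ‖bb n‖ = dist (R n 0) (0 : E3) := (dist_zero_right _).symm
    rw [h10]
    rw [h1, h2, h9] at h5
    rw [h7, h8] at h6
    linarith
  -- extract a convergent subsequence of (A n, bb n)
  set KB : ℝ := max 1 (‖x₀‖ + (1 + ε₀ + KN)) with hKBdef
  have hbdd : ∀ n, (A n, bb n) ∈ Metric.closedBall (0 : (E3 →L[ℝ] E3) × E3) KB := by
    intro n
    rw [Metric.mem_closedBall, dist_zero_right, Prod.norm_def]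
    exact max_le_max (hAnorm n) (hbnorm n)
  obtain ⟨p, _, φ, hφ, htend⟩ :=
    tendsto_subseq_of_bounded Metric.isBounded_closedBall hbdd
  have hAt : Tendsto (fun k => A (φ k)) atTop (𝓝 p.1) :=
    (continuous_fst.tendsto p).comp htend
  have hbt : Tendsto (fun k => bb (φ k)) atTop (𝓝 p.2) :=
    (continuous_snd.tendsto p).comp htend
  -- the limit linear map is an isometry
  have hAinf : ∀ x : E3, ‖p.1 x‖ = ‖x‖ := by
    intro x
    have h2 : Tendsto (fun k => A (φ k) x) atTop (𝓝 (p.1 x)) :=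
      ((ContinuousLinearMap.apply ℝ E3 x).continuous.tendsto p.1).comp hAt
    have h1 : Tendsto (fun k => ‖A (φ k) x‖) atTop (𝓝 ‖p.1 x‖) :=
      (continuous_norm.tendsto _).comp h2
    have h3 : (fun k => ‖A (φ k) x‖) = fun _ => ‖x‖ :=
      funext fun k => (R (φ k)).linearIsometryEquiv.norm_map x
    rw [h3] at h1
    exact tendsto_nhds_unique h1 tendsto_const_nhds
  set Lstar : E3 →ₗᵢ[ℝ] E3 := ⟨(p.1 : E3 →ₗ[ℝ] E3), hAinf⟩ with hLdef
  set Rstar : E3 ≃ᵃⁱ[ℝ] E3 :=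
    ((Lstar.toLinearIsometryEquiv rfl).toAffineIsometryEquiv).trans
      (AffineIsometryEquiv.constVAdd ℝ E3 p.2) with hRstardef
  have hRstar : ∀ x : E3, Rstar x = p.2 + p.1 x := fun _ => rfl
  refine ⟨Rstar, ?_⟩
  have heq : Set.EqOn (⇑Rstar) C M := by
    intro x hx
    have hxKM : ‖x‖ ≤ KM := by
      simpa [Metric.mem_closedBall, dist_zero_right] using hKM hx
    have hKM0 : (0:ℝ) ≤ KM := le_trans (norm_nonneg x) hxKM
    have hle : ∀ ε : ℝ, 0 < ε → ‖Rstar x - C x‖ ≤ 4 * ε := by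
      intro ε hε
      obtain ⟨δ₀, hδ₀, hCδ⟩ := Metric.continuousWithinAt_iff.1 (hC x hx) ε hε
      set δ : ℝ := min δ₀ ε with hδdef
      have hδ : 0 < δ := lt_min hδ₀ hε
      set c : ℝ := (μ (Metric.ball x δ)).toReal with hcdef
      have hc : 0 < c := ENNReal.toReal_pos (hsupp x hx δ hδ).ne' (measure_ne_top μ _)
      obtain ⟨K₁, hK₁⟩ := Metric.tendsto_atTop.1 hAt (ε / (2 * (KM + 1))) (by positivity)
      obtain ⟨K₂, hK₂⟩ := Metric.tendsto_atTop.1 hbt (ε / 2) (by positivity)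
      obtain ⟨K₃, hK₃⟩ := Metric.tendsto_atTop.1 (tendsto_one_div_add_atTop_nhds_zero_nat (𝕜 := ℝ))
        (ε ^ 2 * c) (by positivity)
      set k : ℕ := max K₁ (max K₂ K₃) with hkdef
      set n : ℕ := φ k with hndef
      have hkK₁ : K₁ ≤ k := le_max_left _ _
      have hkK₂ : K₂ ≤ k := le_trans (le_max_left _ _) (le_max_right _ _)
      have hkK₃ : K₃ ≤ k := le_trans (le_max_right _ _) (le_max_right _ _)
      have hint : (∫ z in M, ‖R n z - C z‖ ^ 2 ∂μ) < ε ^ 2 * c := by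
        have hkn : (k : ℝ) ≤ (n : ℝ) := Nat.cast_le.2 hφ.le_apply
        have h1 : (1:ℝ) / (n + 1) ≤ 1 / (k + 1) := by
          apply one_div_le_one_div_of_le (by positivity)
          linarith
        have h2 := hK₃ k hkK₃
        rw [Real.dist_eq, sub_zero, abs_of_nonneg (by positivity)] at h2
        have := hR n
        linarith
      obtain ⟨y, ⟨hy1, hy2⟩, hy3⟩ := key (R n) x hx δ hδ ε hε hint
      have hyx : dist y x < δ := Metric.mem_ball.1 hy1
      -- term 1
      have t1 : ‖Rstar x - R n x‖ ≤ ε := by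
        have hsplit : Rstar x - R n x = (p.2 - bb n) + (p.1 - A n) x := by
          rw [hRstar, hdec, ContinuousLinearMap.sub_apply]
          abel
        have e2 : ‖p.1 - A n‖ < ε / (2 * (KM + 1)) := by
          have := hK₁ k hkK₁
          rwa [dist_comm, dist_eq_norm] at this
        have e1 : ‖(p.1 - A n) x‖ ≤ ‖p.1 - A n‖ * ‖x‖ :=
          ContinuousLinearMap.le_opNorm _ _
        have e3 : ‖p.1 - A n‖ * ‖x‖ ≤ (ε / (2 * (KM + 1))) * (KM + 1) := by
          apply mul_le_mul e2.le (by linarith) (norm_nonneg _) (by positivity)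
        have e4 : (ε / (2 * (KM + 1))) * (KM + 1) = ε / 2 := by
          field_simp
        have e5 : ‖p.2 - bb n‖ < ε / 2 := by
          have := hK₂ k hkK₂
          rwa [dist_comm, dist_eq_norm] at this
        calc ‖Rstar x - R n x‖ = ‖(p.2 - bb n) + (p.1 - A n) x‖ := by rw [hsplit]
          _ ≤ ‖p.2 - bb n‖ + ‖(p.1 - A n) x‖ := norm_add_le _ _
          _ ≤ ε := by rw [e4] at e3; linarith
      -- term 2
      have t2 : ‖R n x - R n y‖ ≤ ε := by
        rw [← dist_eq_norm, (R n).dist_map]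
        have : dist x y < δ := by rwa [dist_comm]
        exact le_trans this.le (min_le_right _ _)
      -- term 4
      have t4 : ‖C y - C x‖ ≤ ε := by
        have := hCδ hy2 (lt_of_lt_of_le hyx (min_le_left _ _))
        rw [dist_eq_norm] at this
        linarith
      have tri := dist_triangle4 (Rstar x) (R n x) (R n y) (C x)
      have tri2 : dist (R n y) (C x) ≤ dist (R n y) (C y) + dist (C y) (C x) :=
        dist_triangle _ _ _
      simp only [dist_eq_norm] at tri tri2
      linarith
    have h0 : ‖Rstar x - C x‖ ≤ 0 := by
      by_contra h
      push_neg at h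
      have := hle (‖Rstar x - C x‖ / 8) (by linarith)
      linarith
    have hz : ‖Rstar x - C x‖ = 0 := le_antisymm h0 (norm_nonneg _)
    exact sub_eq_zero.1 (norm_eq_zero.1 hz)
  rw [heq.image_eq]
  exact hCsurj
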